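/- For every k ≥ 1 and every h ∈ Δ_k having a unique maximal coordinate (i.e., there is an index i with h_i > h_j for all j ≠ i), there exists γ₀ > 0 such that for all γ ∈ (0, γ₀], the projection of the scaled vector places all mass on that coordinate: Π(h/γ) = e_i. -/

import Mathlib

open scoped BigOperators

/-- The probability simplex in `ℝ^k`. -/
def simplex (k : ℕ) : Set (EuclideanSpace ℝ (Fin k)) :=
  {p | (∀ i, 0 ≤ p i) ∧ ∑ i, p i = 1}

/-- `q` is the Euclidean (L2) metric projection of `x` onto the probability simplex. -/
def IsL2ProjOnSimplex (k : ℕ) (x q : EuclideanSpace ℝ (Fin k)) : Prop :=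
  q ∈ simplex k ∧ ∀ r ∈ simplex k, ‖q - x‖ ≤ ‖r - x‖

/-- for every `k ≥ 1` and every `h ∈ Δ_k` with a unique maximal coordinate
`i` (i.e. `h i > h j` for all `j ≠ i`), there exists `γ₀ > 0` such that for all
`γ ∈ (0, γ₀]`, the projection of `h/γ` onto the simplex is `e_i`. -/
theorem stmt_18 (k : ℕ) (hk : 1 ≤ k) (h : EuclideanSpace ℝ (Fin k)) (hh : h ∈ simplex k)
    (i : Fin k) (hi : ∀ j, j ≠ i → h j < h i) :
    ∃ γ₀ > (0 : ℝ), ∀ γ ∈ Set.Ioc (0 : ℝ) γ₀,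
      IsL2ProjOnSimplex k (γ⁻¹ • h) (EuclideanSpace.single i (1 : ℝ)) := by
  obtain ⟨δ, hδpos, hδ⟩ : ∃ δ : ℝ, 0 < δ ∧ ∀ j, j ≠ i → h j ≤ h i - δ := by
    rcases (Finset.univ.erase i).eq_empty_or_nonempty with he | hne
    · refine ⟨1, one_pos, fun j hj => ?_⟩
      exact absurd (Finset.mem_erase.mpr ⟨hj, Finset.mem_univ j⟩) (by simp [he])
    · obtain ⟨j₀, hj₀, hmax⟩ := Finset.exists_max_image _ h hne
      have hj₀i : j₀ ≠ i := (Finset.mem_erase.mp hj₀).1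
      refine ⟨h i - h j₀, by linarith [hi j₀ hj₀i], fun j hj => ?_⟩
      have := hmax j (Finset.mem_erase.mpr ⟨hj, Finset.mem_univ j⟩)
      linarith
  refine ⟨δ, hδpos, ?_⟩
  rintro γ ⟨hγ0, hγδ⟩
  set q : EuclideanSpace ℝ (Fin k) := EuclideanSpace.single i 1 with hqdef
  have hqj : ∀ j, q j = if j = i then 1 else 0 := by
    intro j; simp [hqdef, EuclideanSpace.single_apply]
  have hqmem : q ∈ simplex k := by
    constructor
    · intro j; rw [hqj]; split <;> norm_num
    · simp only [hqj]; rw [Finset.sum_ite_eq' Finset.univ i (fun _ => (1:ℝ))]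
      simp
  refine ⟨hqmem, ?_⟩
  rintro r ⟨hrpos, hrsum⟩
  have hri : r i ≤ 1 := by
    calc r i ≤ ∑ j, r j := Finset.single_le_sum (fun j _ => hrpos j) (Finset.mem_univ i)
    _ = 1 := hrsum
  set x : EuclideanSpace ℝ (Fin k) := γ⁻¹ • h with hxdef
  have hxj : ∀ j, x j = γ⁻¹ * h j := by intro j; simp [hxdef]
  -- sum of r over erase i
  have hrerase : ∑ j ∈ Finset.univ.erase i, r j = 1 - r i := by
    have := Finset.sum_erase_add Finset.univ r (Finset.mem_univ i)
    linarith [hrsum ▸ this]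
  have key : (inner ℝ (x - q) (r - q) : ℝ) ≤ 0 := by
    have hinner : (inner ℝ (x - q) (r - q) : ℝ) = ∑ j, (x j - q j) * (r j - q j) := by
      rw [PiLp.inner_apply]
      apply Finset.sum_congr rfl
      intro j _
      simp [PiLp.sub_apply]; ring
    rw [hinner]
    have hsplit : ∑ j, (x j - q j) * (r j - q j)
        = (∑ j ∈ Finset.univ.erase i, (x j - q j) * (r j - q j))
          + (x i - q i) * (r i - q i) :=
      (Finset.sum_erase_add Finset.univ _ (Finset.mem_univ i)).symm
    rw [hsplit]
    have hterm : ∀ j ∈ Finset.univ.erase i,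
        (x j - q j) * (r j - q j) ≤ γ⁻¹ * (h i - δ) * r j := by
      intro j hj
      have hji : j ≠ i := (Finset.mem_erase.mp hj).1
      rw [hxj, hqj, if_neg hji]
      have h1 : h j ≤ h i - δ := hδ j hji
      have h2 : (0:ℝ) ≤ γ⁻¹ := le_of_lt (inv_pos.mpr hγ0)
      have : γ⁻¹ * h j ≤ γ⁻¹ * (h i - δ) := mul_le_mul_of_nonneg_left h1 h2
      nlinarith [hrpos j]
    have hsum1 : (∑ j ∈ Finset.univ.erase i, (x j - q j) * (r j - q j))
        ≤ ∑ j ∈ Finset.univ.erase i, γ⁻¹ * (h i - δ) * r j :=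
      Finset.sum_le_sum hterm
    have hsum2 : ∑ j ∈ Finset.univ.erase i, γ⁻¹ * (h i - δ) * r j
        = γ⁻¹ * (h i - δ) * (1 - r i) := by
      rw [← Finset.mul_sum, hrerase]
    have hti : (x i - q i) * (r i - q i) = (γ⁻¹ * h i - 1) * (r i - 1) := by
      rw [hxj, hqj, if_pos rfl]
    have hginv : γ * γ⁻¹ = 1 := mul_inv_cancel₀ (ne_of_gt hγ0)
    nlinarith [mul_nonneg (sub_nonneg.mpr hri) (sub_nonneg.mpr hγδ),
      inv_pos.mpr hγ0]
  -- conclude norm inequality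
  have hdecomp : r - x = (r - q) + (q - x) := by abel
  have hexp : ‖r - x‖ ^ 2
      = ‖r - q‖ ^ 2 + 2 * (inner ℝ (r - q) (q - x) : ℝ) + ‖q - x‖ ^ 2 := by
    rw [hdecomp, norm_add_sq_real]
  have hin : (inner ℝ (r - q) (q - x) : ℝ) = - (inner ℝ (x - q) (r - q) : ℝ) := by
    rw [real_inner_comm, ← neg_sub x q, inner_neg_left]
  have hsq : ‖q - x‖ ^ 2 ≤ ‖r - x‖ ^ 2 := by
    rw [hexp, hin]
    nlinarith [sq_nonneg ‖r - q‖]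
  nlinarith [norm_nonneg (q - x), norm_nonneg (r - x)]
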